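/- In a finite perfect-information game satisfying the no-indifference condition, all subgame-perfect equilibria (pure or behavioral mixed) induce, at every node, the same payoff vector; moreover every mixed SPE is outcome-equivalent to a pure SPE in the sense that its induced leaf distribution is supported on leaves all carrying the common SPE payoff vector. -/
import Mathlib


set_option linter.unusedVariables false

/-- A finite game tree with `n` players: each internal node is controlled by a
player in `Fin n` and has `k+1` children; leaves carry a payoff vector. -/
inductive GameTree (n : ℕ) : Type
  | leaf (u : Fin n → ℝ) : GameTree n
  | node (p : Fin n) (k : ℕ) (c : Fin (k + 1) → GameTree n) : GameTree n

/-- A pure strategy profile: a choice of child at every internal node. -/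
inductive PureProfile {n : ℕ} : GameTree n → Type
  | leaf {u : Fin n → ℝ} : PureProfile (.leaf u)
  | node {p : Fin n} {k : ℕ} {c : Fin (k + 1) → GameTree n}
      (ch : Fin (k + 1)) (sub : ∀ j, PureProfile (c j)) :
      PureProfile (.node p k c)

/-- The payoff vector induced by a pure strategy profile. -/
def payoff {n : ℕ} : {t : GameTree n} → PureProfile t → Fin n → ℝ
  | .leaf u, .leaf, i => u i
  | .node _ _ _, .node ch sub, i => payoff (sub ch) i

/-- `Dev i g g'` : `g'` is a unilateral deviation of `g` by player `i`
(they agree at every node not controlled by `i`). -/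
def Dev {n : ℕ} (i : Fin n) : {t : GameTree n} → PureProfile t → PureProfile t → Prop
  | .leaf _, _, _ => True
  | .node p _ _, .node ch sub, .node ch' sub' =>
      (p ≠ i → ch' = ch) ∧ ∀ j, Dev i (sub j) (sub' j)

/-- Subgame-perfect equilibrium for pure profiles: at every node, no player can
strictly improve her payoff in the subgame rooted there by a unilateral deviation. -/
def IsSPE {n : ℕ} : {t : GameTree n} → PureProfile t → Prop
  | .leaf _, _ => True
  | .node p k c, .node ch sub =>
      (∀ j, IsSPE (sub j)) ∧
      ∀ (i : Fin n) (g' : PureProfile (.node p k c)),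
        Dev i (.node ch sub) g' →
        payoff g' i ≤ payoff (PureProfile.node (p := p) ch sub) i

/-- A behavioral mixed strategy profile: a probability distribution over
children at every internal node. -/
inductive MixedProfile {n : ℕ} : GameTree n → Type
  | leaf {u : Fin n → ℝ} : MixedProfile (.leaf u)
  | node {p : Fin n} {k : ℕ} {c : Fin (k + 1) → GameTree n}
      (w : Fin (k + 1) → ℝ) (hw : ∀ j, 0 ≤ w j) (hsum : ∑ j, w j = 1)
      (sub : ∀ j, MixedProfile (c j)) :
      MixedProfile (.node p k c)

/-- Expected payoff vector of a behavioral mixed strategy profile. -/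
noncomputable def mpayoff {n : ℕ} : {t : GameTree n} → MixedProfile t → Fin n → ℝ
  | .leaf u, .leaf, i => u i
  | .node _ _ _, .node w _ _ sub, i => ∑ j, w j * mpayoff (sub j) i

/-- `MDev i f f'` : `f'` is a unilateral deviation of the mixed profile `f` by player `i`. -/
def MDev {n : ℕ} (i : Fin n) : {t : GameTree n} → MixedProfile t → MixedProfile t → Prop
  | .leaf _, _, _ => True
  | .node p _ _, .node w _ _ sub, .node w' _ _ sub' =>
      (p ≠ i → w' = w) ∧ ∀ j, MDev i (sub j) (sub' j)

/-- Subgame-perfect equilibrium for behavioral mixed profiles. -/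
noncomputable def MixedSPE {n : ℕ} : {t : GameTree n} → MixedProfile t → Prop
  | .leaf _, _ => True
  | .node p k c, .node w hw hs sub =>
      (∀ j, MixedSPE (sub j)) ∧
      ∀ (i : Fin n) (f' : MixedProfile (.node p k c)),
        MDev i (MixedProfile.node (p := p) w hw hs sub) f' →
        mpayoff f' i ≤ mpayoff (MixedProfile.node (p := p) w hw hs sub) i

/-- `InSupport f g` : at every internal node, the pure profile `g` selects an
action lying in the support of the mixed action of `f` at that node. -/
def InSupport {n : ℕ} : {t : GameTree n} → MixedProfile t → PureProfile t → Prop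
  | .leaf _, _, _ => True
  | .node _ _ _, .node w _ _ msub, .node ch psub =>
      0 < w ch ∧ ∀ j, InSupport (msub j) (psub j)

/-- The payoffs of leaves of the game tree. -/
def IsLeafPayoff {n : ℕ} : GameTree n → (Fin n → ℝ) → Prop
  | .leaf u, v => u = v
  | .node _ _ c, v => ∃ j, IsLeafPayoff (c j) v

/-- No-indifference condition: if two leaves give the same payoff to some
player, they give the same payoff to every player. -/
def NoIndifference {n : ℕ} (t : GameTree n) : Prop :=
  ∀ u v, IsLeafPayoff t u → IsLeafPayoff t v → (∃ i, u i = v i) → u = v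

/-- The Dirac (pure) behavioral profile associated with a pure profile. -/
noncomputable def toMixed {n : ℕ} : {t : GameTree n} → PureProfile t → MixedProfile t
  | .leaf _, .leaf => .leaf
  | .node p _ _, .node ch sub =>
      .node (p := p) (fun j => if j = ch then 1 else 0)
        (by intro j; by_cases h : j = ch <;> simp [h])
        (by simp)
        (fun j => toMixed (sub j))

/-- Two mixed profiles induce the same payoff vector at every node. -/
def MPayoffAgree {n : ℕ} : {t : GameTree n} → MixedProfile t → MixedProfile t → Prop
  | .leaf _, _, _ => True
  | .node p _ _, .node w hw hs sub, .node w' hw' hs' sub' =>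
      (∀ i, mpayoff (MixedProfile.node (p := p) w hw hs sub) i
          = mpayoff (MixedProfile.node (p := p) w' hw' hs' sub') i) ∧
      ∀ j, MPayoffAgree (sub j) (sub' j)

/-- The leaf distribution induced by the mixed profile is supported on leaves
whose payoff vector is `v`. -/
def SupportedOnValue {n : ℕ} : {t : GameTree n} → MixedProfile t → (Fin n → ℝ) → Prop
  | .leaf u, _, v => u = v
  | .node _ _ _, .node w _ _ sub, v => ∀ j, 0 < w j → SupportedOnValue (sub j) v

lemma dev_refl {n : ℕ} (i : Fin n) : ∀ {t : GameTree n} (g : PureProfile t), Dev i g g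
  | .leaf _, .leaf => trivial
  | .node p k c, .node ch sub => ⟨fun _ => rfl, fun j => dev_refl i (sub j)⟩

lemma mdev_refl {n : ℕ} (i : Fin n) : ∀ {t : GameTree n} (f : MixedProfile t), MDev i f f
  | .leaf _, .leaf => trivial
  | .node p k c, .node w hw hs sub => ⟨fun _ => rfl, fun j => mdev_refl i (sub j)⟩

def diracW {k : ℕ} (j : Fin (k+1)) : Fin (k+1) → ℝ := fun j' => if j' = j then 1 else 0

lemma diracW_nonneg {k : ℕ} (j j' : Fin (k+1)) : 0 ≤ diracW j j' := by
  unfold diracW; split <;> norm_num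

lemma diracW_sum {k : ℕ} (j : Fin (k+1)) : ∑ j', diracW j j' = 1 := by
  simp [diracW]

lemma dirac_mpayoff {n : ℕ} {p : Fin n} {k : ℕ} {c : Fin (k+1) → GameTree n}
    (j : Fin (k+1)) (sub : ∀ j', MixedProfile (c j')) (i : Fin n) :
    mpayoff (MixedProfile.node (p := p) (diracW j) (diracW_nonneg j) (diracW_sum j) sub) i
      = mpayoff (sub j) i := by
  simp only [mpayoff]
  rw [Finset.sum_eq_single j]
  · simp [diracW]
  · intro j' _ hj'; simp [diracW, hj']
  · simp

lemma mpayoff_toMixed {n : ℕ} : ∀ {t : GameTree n} (g : PureProfile t) (i : Fin n),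
    mpayoff (toMixed g) i = payoff g i
  | .leaf _, .leaf, i => rfl
  | .node p k c, .node ch sub, i => by
      simp only [toMixed, mpayoff, payoff]
      rw [Finset.sum_eq_single ch]
      · simp [mpayoff_toMixed (sub ch) i]
      · intro j _ hj; simp [hj]
      · simp

lemma noIndiff_child {n : ℕ} {p : Fin n} {k : ℕ} {c : Fin (k+1) → GameTree n}
    (h : NoIndifference (.node p k c)) (j : Fin (k+1)) : NoIndifference (c j) :=
  fun u v hu hv he => h u v ⟨j, hu⟩ ⟨j, hv⟩ he

lemma agree_payoff {n : ℕ} : ∀ {t : GameTree n} {f f' : MixedProfile t},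
    MPayoffAgree f f' → ∀ i, mpayoff f i = mpayoff f' i
  | .leaf _, .leaf, .leaf, _, _ => rfl
  | .node _ _ _, .node _ _ _ _, .node _ _ _ _, h, i => h.1 i

lemma toMixed_dev_le {n : ℕ} : ∀ {t : GameTree n} (g : PureProfile t), IsSPE g →
    ∀ (i : Fin n) (f' : MixedProfile t), MDev i (toMixed g) f' → mpayoff f' i ≤ payoff g i
  | .leaf _, .leaf, _, i, .leaf, _ => le_refl _
  | .node p k c, .node ch sub, hg, i, .node w' hw' hs' sub', hdev => by
      simp only [toMixed, MDev] at hdev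
      obtain ⟨hweq, hdevsub⟩ := hdev
      obtain ⟨hsubspe, hopt⟩ := hg
      have ihj : ∀ j, mpayoff (sub' j) i ≤ payoff (sub j) i :=
        fun j => toMixed_dev_le (sub j) (hsubspe j) i (sub' j) (hdevsub j)
      by_cases hp : p = i
      · subst hp
        have hle : ∀ j, payoff (sub j) p ≤ payoff (PureProfile.node (p := p) ch sub) p := by
          intro j
          have hdev' : Dev p (PureProfile.node (p := p) ch sub)
              (PureProfile.node (p := p) j sub) :=
            ⟨fun h => absurd rfl h, fun j' => dev_refl p (sub j')⟩
          exact hopt p _ hdev'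
        calc mpayoff (MixedProfile.node (p := p) w' hw' hs' sub') p
            = ∑ j, w' j * mpayoff (sub' j) p := rfl
          _ ≤ ∑ j, w' j * payoff (PureProfile.node (p := p) ch sub) p := by
              apply Finset.sum_le_sum
              intro j _
              exact mul_le_mul_of_nonneg_left ((ihj j).trans (hle j)) (hw' j)
          _ = payoff (PureProfile.node (p := p) ch sub) p := by
              rw [← Finset.sum_mul, hs', one_mul]
      · have hw'eq := hweq hp
        subst hw'eq
        calc mpayoff (MixedProfile.node (p := p) _ hw' hs' sub') i
            = ∑ j, (if j = ch then (1:ℝ) else 0) * mpayoff (sub' j) i := rfl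
          _ = mpayoff (sub' ch) i := by
              rw [Finset.sum_eq_single ch]
              · simp
              · intro j _ hj; simp [hj]
              · simp
          _ ≤ payoff (sub ch) i := ihj ch

lemma mixedSPE_toMixed {n : ℕ} : ∀ {t : GameTree n} (g : PureProfile t), IsSPE g →
    MixedSPE (toMixed g)
  | .leaf _, .leaf, _ => trivial
  | .node p k c, .node ch sub, hg => by
      simp only [toMixed, MixedSPE]
      refine ⟨fun j => mixedSPE_toMixed (sub j) (hg.1 j), ?_⟩
      intro i f' hdev
      have h1 := toMixed_dev_le (PureProfile.node (p := p) ch sub) hg i f' hdev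
      have h2 := mpayoff_toMixed (PureProfile.node (p := p) ch sub) i
      simp only [toMixed] at h2
      rw [h2]
      exact h1

lemma key {n : ℕ} : ∀ (t : GameTree n), NoIndifference t →
    (∀ f : MixedProfile t, MixedSPE f →
      IsLeafPayoff t (mpayoff f) ∧ SupportedOnValue f (mpayoff f)) ∧
    (∀ f f' : MixedProfile t, MixedSPE f → MixedSPE f' → MPayoffAgree f f') := by
  intro t
  induction t with
  | leaf u =>
      intro _
      constructor
      · rintro ⟨⟩ _
        exact ⟨funext fun i => rfl, funext fun i => rfl⟩
      · rintro ⟨⟩ ⟨⟩ _ _; trivial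
  | node p k c ih =>
      intro hni
      have hnic : ∀ j, NoIndifference (c j) := noIndiff_child hni
      have part1 : ∀ f : MixedProfile (.node p k c), MixedSPE f →
          IsLeafPayoff (.node p k c) (mpayoff f) ∧ SupportedOnValue f (mpayoff f) := by
        intro f hf
        cases f with
        | node w hw hs sub =>
        simp only [MixedSPE] at hf
        obtain ⟨hsub, hopt⟩ := hf
        have hchild : ∀ j, IsLeafPayoff (c j) (mpayoff (sub j)) ∧
            SupportedOnValue (sub j) (mpayoff (sub j)) :=
          fun j => ((ih j) (hnic j)).1 (sub j) (hsub j)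
        set V : Fin n → ℝ := mpayoff (MixedProfile.node (p := p) w hw hs sub) with hVdef
        have hVsum : ∀ i, V i = ∑ j, w j * mpayoff (sub j) i := fun i => rfl
        have hle : ∀ j, mpayoff (sub j) p ≤ V p := by
          intro j
          have hd : MDev p (MixedProfile.node (p := p) w hw hs sub)
              (MixedProfile.node (p := p) (diracW j) (diracW_nonneg j) (diracW_sum j) sub) :=
            ⟨fun h => absurd rfl h, fun j' => mdev_refl p (sub j')⟩
          have := hopt p _ hd
          rwa [dirac_mpayoff] at this
        have hsum0 : ∑ j, w j * (V p - mpayoff (sub j) p) = 0 := by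
          simp only [mul_sub]
          rw [Finset.sum_sub_distrib, ← Finset.sum_mul, hs, one_mul, ← hVsum, sub_self]
        have hkey : ∀ j, 0 < w j → mpayoff (sub j) p = V p := by
          intro j hj
          have hterm := (Finset.sum_eq_zero_iff_of_nonneg
            (fun j' _ => mul_nonneg (hw j') (sub_nonneg.mpr (hle j')))).mp hsum0 j
            (Finset.mem_univ j)
          have := (mul_eq_zero.mp hterm).resolve_left (ne_of_gt hj)
          linarith
        have hex : ∃ j, 0 < w j := by
          by_contra h
          push_neg at h
          have hz : ∀ j, w j = 0 := fun j => le_antisymm (h j) (hw j)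
          simp [hz] at hs
        obtain ⟨j0, hj0⟩ := hex
        have hvall : ∀ j, 0 < w j → mpayoff (sub j) = mpayoff (sub j0) := by
          intro j hj
          exact hni _ _ ⟨j, (hchild j).1⟩ ⟨j0, (hchild j0).1⟩
            ⟨p, by rw [hkey j hj, hkey j0 hj0]⟩
        have hVv : V = mpayoff (sub j0) := by
          funext i
          rw [hVsum]
          have : ∀ j ∈ Finset.univ, w j * mpayoff (sub j) i = w j * mpayoff (sub j0) i := by
            intro j _
            rcases eq_or_lt_of_le (hw j) with h0 | h0
            · rw [← h0]; ring
            · rw [hvall j h0]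
          rw [Finset.sum_congr rfl this, ← Finset.sum_mul, hs, one_mul]
        constructor
        · exact ⟨j0, hVv ▸ (hchild j0).1⟩
        · intro j hj
          have heq : mpayoff (sub j) = V := (hvall j hj).trans hVv.symm
          exact heq ▸ (hchild j).2
      refine ⟨part1, ?_⟩
      intro f f' hf hf'
      cases f with
      | node w hw hs sub =>
      cases f' with
      | node w' hw' hs' sub' =>
      have hlp := (part1 _ hf).1
      have hlp' := (part1 _ hf').1
      simp only [MixedSPE] at hf hf'
      obtain ⟨hsub, hopt⟩ := hf
      obtain ⟨hsub', hopt'⟩ := hf'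
      have hag : ∀ j, MPayoffAgree (sub j) (sub' j) :=
        fun j => ((ih j) (hnic j)).2 _ _ (hsub j) (hsub' j)
      have hvv : ∀ j i, mpayoff (sub j) i = mpayoff (sub' j) i :=
        fun j => agree_payoff (hag j)
      set V : Fin n → ℝ := mpayoff (MixedProfile.node (p := p) w hw hs sub) with hVdef
      set V' : Fin n → ℝ := mpayoff (MixedProfile.node (p := p) w' hw' hs' sub') with hV'def
      have hleV : ∀ j, mpayoff (sub j) p ≤ V p := by
        intro j
        have hd : MDev p (MixedProfile.node (p := p) w hw hs sub)
            (MixedProfile.node (p := p) (diracW j) (diracW_nonneg j) (diracW_sum j) sub) :=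
          ⟨fun h => absurd rfl h, fun j' => mdev_refl p (sub j')⟩
        have := hopt p _ hd
        rwa [dirac_mpayoff] at this
      have hleV' : ∀ j, mpayoff (sub' j) p ≤ V' p := by
        intro j
        have hd : MDev p (MixedProfile.node (p := p) w' hw' hs' sub')
            (MixedProfile.node (p := p) (diracW j) (diracW_nonneg j) (diracW_sum j) sub') :=
          ⟨fun h => absurd rfl h, fun j' => mdev_refl p (sub' j')⟩
        have := hopt' p _ hd
        rwa [dirac_mpayoff] at this
      have hVle : V p ≤ V' p := by
        have : V p = ∑ j, w j * mpayoff (sub j) p := rfl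
        rw [this]
        calc ∑ j, w j * mpayoff (sub j) p
            ≤ ∑ j, w j * V' p := by
              apply Finset.sum_le_sum
              intro j _
              exact mul_le_mul_of_nonneg_left ((hvv j p) ▸ hleV' j) (hw j)
          _ = V' p := by rw [← Finset.sum_mul, hs, one_mul]
      have hV'le : V' p ≤ V p := by
        have : V' p = ∑ j, w' j * mpayoff (sub' j) p := rfl
        rw [this]
        calc ∑ j, w' j * mpayoff (sub' j) p
            ≤ ∑ j, w' j * V p := by
              apply Finset.sum_le_sum
              intro j _
              exact mul_le_mul_of_nonneg_left ((hvv j p).symm ▸ hleV j) (hw' j)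
          _ = V p := by rw [← Finset.sum_mul, hs', one_mul]
      have hVV' : V = V' := hni _ _ hlp hlp' ⟨p, le_antisymm hVle hV'le⟩
      exact ⟨fun i => congrFun hVV' i, hag⟩

theorem stmt15 {n : ℕ} (t : GameTree n) (hni : NoIndifference t) :
    (∀ f f' : MixedProfile t, MixedSPE f → MixedSPE f' → MPayoffAgree f f') ∧
    (∀ (g : PureProfile t) (f : MixedProfile t),
      IsSPE g → MixedSPE f → MPayoffAgree (toMixed g) f) ∧
    (∀ f : MixedProfile t, MixedSPE f →
      SupportedOnValue f (fun i => mpayoff f i)) := by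
  refine ⟨(key t hni).2, ?_, fun f hf => ((key t hni).1 f hf).2⟩
  intro g f hg hf
  exact (key t hni).2 (toMixed g) f (mixedSPE_toMixed g hg) hf
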